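/- If A is a well-formed λα-term and A → B is a one-step λα-reduction, then FV(A) ≥ FV(B) in the context ordering. -/

import Mathlib

abbrev Var := ℕ
abbrev Ctx := Finset Var × List Var

/-- `Γ,x` : extend the local part with `x` as innermost (rightmost) variable.
Lists represent local contexts with head = outermost (leftmost). -/
def Ctx.snoc (Γ : Ctx) (x : Var) : Ctx := (Γ.1, Γ.2 ++ [x])

/-- The least partial order on contexts generated by
`(G,L) < (G ∪ {x}, L)` for `x ∉ G` and `(G,L) < (G \ {x}, x::L)`. -/
inductive CtxLe : Ctx → Ctx → Prop
  | refl (Γ : Ctx) : CtxLe Γ Γ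
  | trans {Γ Δ Θ : Ctx} : CtxLe Γ Δ → CtxLe Δ Θ → CtxLe Γ Θ
  | glob (G : Finset Var) (L : List Var) (x : Var) (h : x ∉ G) :
      CtxLe (G, L) (insert x G, L)
  | loc (G : Finset Var) (L : List Var) (x : Var) :
      CtxLe (G, L) (G.erase x, x :: L)

def Compatible (Γ Δ : Ctx) : Prop := ∃ Θ, CtxLe Γ Θ ∧ CtxLe Δ Θ

/-- Auxiliary supremum on contexts whose local lists have head = innermost. -/
def supAux : Finset Var → List Var → Finset Var → List Var → Option (Finset Var × List Var)
  | G₁, [], G₂, [] => some (G₁ ∪ G₂, [])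
  | G₁, x :: l₁, G₂, [] =>
      (supAux G₁ l₁ (G₂.erase x) []).map fun p => (p.1, x :: p.2)
  | G₁, [], G₂, x :: l₂ =>
      (supAux (G₁.erase x) [] G₂ l₂).map fun p => (p.1, x :: p.2)
  | G₁, x :: l₁, G₂, y :: l₂ =>
      if x = y then (supAux G₁ l₁ G₂ l₂).map fun p => (p.1, x :: p.2) else none
  termination_by _ l₁ _ l₂ => l₁.length + l₂.length

/-- The (partial) supremum `Γ ⊔ Δ` of two contexts. -/
def ctxSup (Γ Δ : Ctx) : Option Ctx :=
  (supAux Γ.1 Γ.2.reverse Δ.1 Δ.2.reverse).map fun p => (p.1, p.2.reverse)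

/-- The partial operation `O_{λx}` : `O_{λx}(Γ,x) = Γ`, `O_{λx}(G, nil) = (G \ {x}, nil)`,
undefined otherwise. -/
def Olam (x : Var) (Γ : Ctx) : Option Ctx :=
  match Γ.2.reverse with
  | [] => some (Γ.1.erase x, [])
  | y :: l => if y = x then some (Γ.1, l.reverse) else none

mutual
/-- Terms of the calculus λα. -/
inductive Tm : Type
  | var : Var → Tm
  | app : Tm → Tm → Tm
  | lam : Var → Tm → Tm
  | sub : Sb → Tm → Tm
/-- Substitutions of the calculus λα: `[B/x]`, `Wx`, `{yx}`, `Sₓ`. -/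
inductive Sb : Type
  | push : Tm → Var → Sb
  | weak : Var → Sb
  | ren : Var → Var → Sb
  | lift : Sb → Var → Sb
end

mutual
/-- The typing judgement `Γ ⊢ A` of λα (rules R1–R6). -/
inductive Judg : Ctx → Tm → Prop
  | r1 {G : Finset Var} {x : Var} (h : x ∈ G) : Judg (G, []) (.var x)
  | r2 (Γ : Ctx) (x : Var) : Judg (Γ.snoc x) (.var x)
  | r3 {Γ : Ctx} {x y : Var} (h : x ≠ y) : Judg Γ (.var x) → Judg (Γ.snoc y) (.var x)
  | r4 {Γ A B} : Judg Γ A → Judg Γ B → Judg Γ (.app A B)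
  | r5 {Γ x A} : Judg (Ctx.snoc Γ x) A → Judg Γ (.lam x A)
  | r6 {Γ Δ S A} : SJudg Γ S Δ → Judg Δ A → Judg Γ (.sub S A)
/-- The judgement `Γ ⊢ S ▷ Δ` of λα (rules R7–R10). -/
inductive SJudg : Ctx → Sb → Ctx → Prop
  | r7 {Γ B x} : Judg Γ B → SJudg Γ (.push B x) (Γ.snoc x)
  | r8 (Γ x) : SJudg (Ctx.snoc Γ x) (.weak x) Γ
  | r9 (Γ y x) : SJudg (Ctx.snoc Γ y) (.ren y x) (Ctx.snoc Γ x)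
  | r10 {Γ Δ S} (x) : SJudg Γ S Δ → SJudg (Ctx.snoc Γ x) (.lift S x) (Ctx.snoc Δ x)
end

mutual
/-- Weight of a term, used for the termination of `FV`. -/
def wT : Tm → ℕ
  | .var _ => 1
  | .app a b => wT a + wT b + 1
  | .lam _ a => wT a + 1
  | .sub s a => wS s + wT a
/-- Weight of a substitution, used for the termination of `FV`. -/
def wS : Sb → ℕ
  | .weak _ => 1
  | .push b _ => wT b + 4
  | .ren _ _ => 4
  | .lift s _ => wS s + 3
end

/-- The partial free-variable function of λα, valued in contexts. -/
def FV : Tm → Option Ctx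
  | .var x => some ({x}, [])
  | .app A B => do ctxSup (← FV A) (← FV B)
  | .lam x A => do Olam x (← FV A)
  | .sub (.weak x) A => (FV A).map (fun Γ => Ctx.snoc Γ x)
  | .sub (.push B x) A => FV (.app (.lam x A) B)
  | .sub (.ren y x) A => FV (.sub (.weak y) (.lam x A))
  | .sub (.lift S x) A => FV (.sub (.weak x) (.sub S (.lam x A)))
  termination_by t => wT t
  decreasing_by all_goals simp [wT, wS] <;> omega

/-- `x ∈ Γ` : membership in the global or local part of a context. -/
def memCtx (x : Var) (Γ : Ctx) : Prop := x ∈ Γ.1 ∨ x ∈ Γ.2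

mutual
/-- One-step λα-reduction (all rules including Beta and α), closed under
compatible contexts. -/
inductive Step : Tm → Tm → Prop
  | beta {x A B} : Step (.app (.lam x A) B) (.sub (.push B x) A)
  | app {S A B} : Step (.sub S (.app A B)) (.app (.sub S A) (.sub S B))
  | lam {S x A} : Step (.sub S (.lam x A)) (.lam x (.sub (.lift S x) A))
  | var {B x} : Step (.sub (.push B x) (.var x)) B
  | shift {B x A} : Step (.sub (.push B x) (.sub (.weak x) A)) A
  | shift' {B x z} (h : x ≠ z) : Step (.sub (.push B x) (.var z)) (.var z)
  | idVar {y x} : Step (.sub (.ren y x) (.var x)) (.var y)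
  | idShift {y x A} : Step (.sub (.ren y x) (.sub (.weak x) A)) (.sub (.weak y) A)
  | idShift' {y x z} (h : x ≠ z) :
      Step (.sub (.ren y x) (.var z)) (.sub (.weak y) (.var z))
  | liftVar {S x} : Step (.sub (.lift S x) (.var x)) (.var x)
  | liftShift {S x A} :
      Step (.sub (.lift S x) (.sub (.weak x) A)) (.sub (.weak x) (.sub S A))
  | liftShift' {S x z} (h : x ≠ z) :
      Step (.sub (.lift S x) (.var z)) (.sub (.weak x) (.sub S (.var z)))
  | w {x z} (h : x ≠ z) : Step (.sub (.weak x) (.var z)) (.var z)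
  | alpha {x y A Φ} (hFV : FV (.lam x A) = some Φ) (hx : memCtx x Φ)
      (hy : ¬ memCtx y Φ) : Step (.lam x A) (.lam y (.sub (.ren y x) A))
  | lamCong {x A A'} : Step A A' → Step (.lam x A) (.lam x A')
  | appL {A A' B} : Step A A' → Step (.app A B) (.app A' B)
  | appR {A B B'} : Step B B' → Step (.app A B) (.app A B')
  | subL {S S' A} : SStep S S' → Step (.sub S A) (.sub S' A)
  | subR {S A A'} : Step A A' → Step (.sub S A) (.sub S A')
/-- One-step λα-reduction inside substitutions. -/
inductive SStep : Sb → Sb → Prop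
  | push {B B' : Tm} {x} : Step B B' → SStep (.push B x) (.push B' x)
  | lift {S S' : Sb} {x} : SStep S S' → SStep (.lift S x) (.lift S' x)
end



lemma ctxLe_global {G G' : Finset Var} (L : List Var) (h : G ⊆ G') : CtxLe (G, L) (G', L) := by
  have key : ∀ s : Finset Var, CtxLe (G, L) (G ∪ s, L) := by
    intro s
    induction s using Finset.induction_on with
    | empty => simpa using CtxLe.refl (G, L)
    | @insert a s ha ih =>
      rw [Finset.union_insert]
      by_cases h' : a ∈ G ∪ s
      · rw [Finset.insert_eq_self.mpr h']; exact ih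
      · exact CtxLe.trans ih (CtxLe.glob _ _ _ h')
  have : G ∪ G' = G' := Finset.union_eq_right.mpr h
  simpa [this] using key G'

lemma ctxLe_intro {Γ Δ : Ctx} (P : List Var) (h1 : Δ.2 = P ++ Γ.2)
    (h2 : Γ.1 ⊆ Δ.1 ∪ P.toFinset) : CtxLe Γ Δ := by
  obtain ⟨G, L⟩ := Γ; obtain ⟨G', L'⟩ := Δ
  simp only at h1 h2
  subst h1
  induction P generalizing G' with
  | nil => exact ctxLe_global L (by simpa using h2)
  | cons x P ih =>
    have step1 : CtxLe (G, L) (insert x G', P ++ L) := by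
      apply ih
      intro a ha
      have := h2 ha
      simp only [Finset.mem_union, List.toFinset_cons, Finset.mem_insert] at this ⊢
      tauto
    have step2 : CtxLe (insert x G', P ++ L) ((insert x G').erase x, x :: (P ++ L)) :=
      CtxLe.loc _ _ _
    have step3 : CtxLe ((insert x G').erase x, x :: (P ++ L)) (G', x :: (P ++ L)) :=
      ctxLe_global _ (Finset.erase_insert_subset x G')
    exact CtxLe.trans step1 (CtxLe.trans step2 step3)

lemma ctxLe_elim {Γ Δ : Ctx} (h : CtxLe Γ Δ) :
    ∃ P : List Var, Δ.2 = P ++ Γ.2 ∧ Γ.1 ⊆ Δ.1 ∪ P.toFinset := by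
  induction h with
  | refl Γ => exact ⟨[], by simp⟩
  | trans h1 h2 ih1 ih2 =>
    obtain ⟨P1, e1, s1⟩ := ih1
    obtain ⟨P2, e2, s2⟩ := ih2
    refine ⟨P2 ++ P1, by simp [e2, e1], ?_⟩
    intro a ha
    have := s1 ha
    simp only [Finset.mem_union, List.toFinset_append] at this ⊢
    rcases this with h | h
    · have := s2 h; simp only [Finset.mem_union] at this; tauto
    · tauto
  | glob G L x h => exact ⟨[], by simp, by intro a ha; simp [ha]⟩
  | loc G L x =>
    refine ⟨[x], by simp, ?_⟩
    intro a ha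
    by_cases hax : a = x <;> simp [Finset.mem_erase, hax, ha]


lemma supAux_base_right (q : List Var) (G₁ G₂ : Finset Var) :
    supAux G₁ [] G₂ q = some (G₁ \ q.toFinset ∪ G₂, q) := by
  induction q generalizing G₁ with
  | nil => simp [supAux]
  | cons x l ih =>
    rw [supAux, ih]
    simp only [Option.map_some]
    refine congrArg some (Prod.ext ?_ rfl)
    ext b
    simp only [Finset.mem_union, Finset.mem_sdiff, Finset.mem_erase, List.toFinset_cons,
      Finset.mem_insert]
    tauto

lemma supAux_base_left (q : List Var) (G₁ G₂ : Finset Var) :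
    supAux G₁ q G₂ [] = some (G₁ ∪ G₂ \ q.toFinset, q) := by
  induction q generalizing G₂ with
  | nil => simp [supAux]
  | cons x l ih =>
    rw [supAux, ih]
    simp only [Option.map_some]
    refine congrArg some (Prod.ext ?_ rfl)
    ext b
    simp only [Finset.mem_union, Finset.mem_sdiff, Finset.mem_erase, List.toFinset_cons,
      Finset.mem_insert]
    tauto

lemma supAux_right (r q : List Var) (G₁ G₂ : Finset Var) :
    supAux G₁ r G₂ (r ++ q) = some (G₁ \ q.toFinset ∪ G₂, r ++ q) := by
  induction r with
  | nil => simpa using supAux_base_right q G₁ G₂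
  | cons x r ih =>
    rw [List.cons_append, supAux]
    simp [ih]

lemma supAux_left (r q : List Var) (G₁ G₂ : Finset Var) :
    supAux G₁ (r ++ q) G₂ r = some (G₁ ∪ G₂ \ q.toFinset, r ++ q) := by
  induction r with
  | nil => simpa using supAux_base_left q G₁ G₂
  | cons x r ih =>
    rw [List.cons_append, supAux]
    simp [ih]

lemma supAux_some_prefix : ∀ (r₁ r₂ : List Var) (G₁ G₂ : Finset Var) (p),
    supAux G₁ r₁ G₂ r₂ = some p → r₁ <+: r₂ ∨ r₂ <+: r₁
  | [], r₂, _, _, _, _ => Or.inl (List.nil_prefix)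
  | (x :: r₁), [], _, _, _, _ => Or.inr (List.nil_prefix)
  | (x :: r₁), (y :: r₂), G₁, G₂, p, h => by
    rw [supAux] at h
    split at h
    · next heq =>
      subst heq
      rcases Option.map_eq_some_iff.mp h with ⟨p', hp', _⟩
      rcases supAux_some_prefix r₁ r₂ G₁ G₂ p' hp' with h' | h'
      · exact Or.inl (List.cons_prefix_cons.mpr ⟨rfl, h'⟩)
      · exact Or.inr (List.cons_prefix_cons.mpr ⟨rfl, h'⟩)
    · exact absurd h (by simp)


lemma ctxSup_right (G₁ G₂ : Finset Var) (L₁ P : List Var) :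
    ctxSup (G₁, L₁) (G₂, P ++ L₁) = some (G₁ \ P.toFinset ∪ G₂, P ++ L₁) := by
  have : (P ++ L₁).reverse = L₁.reverse ++ P.reverse := by simp
  rw [ctxSup]
  simp only [this, supAux_right, Option.map_some]
  simp [List.toFinset_reverse]

lemma ctxSup_left (G₁ G₂ : Finset Var) (L₂ P : List Var) :
    ctxSup (G₁, P ++ L₂) (G₂, L₂) = some (G₁ ∪ G₂ \ P.toFinset, P ++ L₂) := by
  have : (P ++ L₂).reverse = L₂.reverse ++ P.reverse := by simp
  rw [ctxSup]
  simp only [this, supAux_left, Option.map_some]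
  simp [List.toFinset_reverse]

lemma ctxSup_some_suffix {Γ Δ : Ctx} {Ψ : Ctx} (h : ctxSup Γ Δ = some Ψ) :
    Γ.2 <:+ Δ.2 ∨ Δ.2 <:+ Γ.2 := by
  rw [ctxSup] at h
  rcases Option.map_eq_some_iff.mp h with ⟨p, hp, _⟩
  rcases supAux_some_prefix _ _ _ _ _ hp with h' | h'
  · exact Or.inl (List.reverse_prefix.mp h')
  · exact Or.inr (List.reverse_prefix.mp h')

lemma ctxSup_le {Φ₁ Φ₂ Ψ : Ctx} (h : ctxSup Φ₁ Φ₂ = some Ψ) :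
    CtxLe Φ₁ Ψ ∧ CtxLe Φ₂ Ψ := by
  obtain ⟨G₁, L₁⟩ := Φ₁; obtain ⟨G₂, L₂⟩ := Φ₂
  rcases ctxSup_some_suffix h with ⟨P, rfl⟩ | ⟨P, rfl⟩
  · -- L₂ = P ++ L₁
    rw [ctxSup_right] at h
    obtain rfl := Option.some_injective _ h
    constructor
    · refine ctxLe_intro P rfl ?_
      intro a ha
      by_cases hP : a ∈ P.toFinset <;>
        simp [Finset.mem_union, Finset.mem_sdiff, ha, hP]
    · exact ctxLe_intro [] rfl (by intro a ha; simp [ha])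
  · -- L₁ = P ++ L₂
    rw [ctxSup_left] at h
    obtain rfl := Option.some_injective _ h
    constructor
    · exact ctxLe_intro [] rfl (by intro a ha; simp [ha])
    · refine ctxLe_intro P rfl ?_
      intro a ha
      by_cases hP : a ∈ P.toFinset <;>
        simp [Finset.mem_union, Finset.mem_sdiff, ha, hP]

lemma ctxSup_exists {Φ₁ Φ₂ Θ : Ctx} (h1 : CtxLe Φ₁ Θ) (h2 : CtxLe Φ₂ Θ) :
    ∃ Ψ, ctxSup Φ₁ Φ₂ = some Ψ ∧ CtxLe Ψ Θ := by
  obtain ⟨P₁, e1, s1⟩ := ctxLe_elim h1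
  obtain ⟨P₂, e2, s2⟩ := ctxLe_elim h2
  obtain ⟨G₁, L₁⟩ := Φ₁; obtain ⟨G₂, L₂⟩ := Φ₂
  simp only at e1 e2 s1 s2
  have hsfx : L₁ <:+ L₂ ∨ L₂ <:+ L₁ :=
    List.suffix_or_suffix_of_suffix ⟨P₁, e1.symm⟩ ⟨P₂, e2.symm⟩
  rcases hsfx with ⟨P, rfl⟩ | ⟨P, rfl⟩
  · -- L₂ = P ++ L₁
    refine ⟨_, ctxSup_right G₁ G₂ L₁ P, ?_⟩
    have hPP : P₁ = P₂ ++ P := by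
      apply List.append_cancel_right (bs := L₁)
      rw [← e1, List.append_assoc, ← e2]
    refine ctxLe_intro P₂ e2 ?_
    intro a ha
    simp only [Finset.mem_union, Finset.mem_sdiff] at ha
    rcases ha with ⟨ha, hna⟩ | ha
    · have := s1 ha
      rw [hPP] at this
      simp only [Finset.mem_union, List.toFinset_append] at this ⊢
      tauto
    · exact s2 ha
  · -- L₁ = P ++ L₂
    refine ⟨_, ctxSup_left G₁ G₂ L₂ P, ?_⟩
    have hPP : P₂ = P₁ ++ P := by
      apply List.append_cancel_right (bs := L₂)
      rw [← e2, List.append_assoc, ← e1]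
    refine ctxLe_intro P₁ e1 ?_
    intro a ha
    simp only [Finset.mem_union, Finset.mem_sdiff] at ha
    rcases ha with ha | ⟨ha, hna⟩
    · exact s1 ha
    · have := s2 ha
      rw [hPP] at this
      simp only [Finset.mem_union, List.toFinset_append] at this ⊢
      tauto

lemma ctxSup_mono {Φ₁ Φ₂ Φ₁' Φ₂' Ψ : Ctx} (h1 : CtxLe Φ₁' Φ₁) (h2 : CtxLe Φ₂' Φ₂)
    (h : ctxSup Φ₁ Φ₂ = some Ψ) :
    ∃ Ψ', ctxSup Φ₁' Φ₂' = some Ψ' ∧ CtxLe Ψ' Ψ := by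
  obtain ⟨hl, hr⟩ := ctxSup_le h
  exact ctxSup_exists (CtxLe.trans h1 hl) (CtxLe.trans h2 hr)


lemma concat_inj' {l m : List Var} {a b : Var} (h : l ++ [a] = m ++ [b]) : l = m ∧ a = b := by
  have := List.append_inj' h rfl
  exact ⟨this.1, by simpa using this.2⟩

lemma eq_nil_or_concat' (l : List Var) : l = [] ∨ ∃ L a, l = L ++ [a] := by
  rcases List.eq_nil_or_concat l with h | ⟨L, a, h⟩
  · exact Or.inl h
  · exact Or.inr ⟨L, a, by simpa using h⟩

lemma Olam_nil (x : Var) (G : Finset Var) : Olam x (G, []) = some (G.erase x, []) := by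
  simp [Olam]

lemma Olam_concat (x : Var) (G : Finset Var) (L : List Var) :
    Olam x (G, L ++ [x]) = some (G, L) := by
  simp [Olam]

lemma Olam_snoc (x : Var) (Γ : Ctx) : Olam x (Γ.snoc x) = some Γ := by
  obtain ⟨G, L⟩ := Γ
  exact Olam_concat x G L

lemma Olam_some {x : Var} {Φ Ψ : Ctx} (h : Olam x Φ = some Ψ) :
    (Φ.2 = [] ∧ Ψ = (Φ.1.erase x, [])) ∨ ∃ L, Φ.2 = L ++ [x] ∧ Ψ = (Φ.1, L) := by
  rcases eq_nil_or_concat' Φ.2 with h2 | ⟨L, a, h2⟩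
  · left
    refine ⟨h2, ?_⟩
    rw [Olam, h2] at h
    simpa using h.symm
  · right
    rw [Olam, h2] at h
    simp only [List.reverse_append, List.reverse_cons, List.reverse_nil, List.nil_append,
      List.singleton_append] at h
    split at h
    · next heq =>
      subst heq
      refine ⟨L, h2, ?_⟩
      simpa using h.symm
    · exact absurd h (by simp)

lemma ctxLe_snoc {Γ Δ : Ctx} (x : Var) (h : CtxLe Γ Δ) : CtxLe (Γ.snoc x) (Δ.snoc x) := by
  obtain ⟨P, e, s⟩ := ctxLe_elim h
  exact ctxLe_intro P (by simp [Ctx.snoc, e]) s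

lemma ctxSup_comm {Φ₁ Φ₂ Ψ : Ctx} (h : ctxSup Φ₁ Φ₂ = some Ψ) : ctxSup Φ₂ Φ₁ = some Ψ := by
  obtain ⟨G₁, L₁⟩ := Φ₁; obtain ⟨G₂, L₂⟩ := Φ₂
  rcases ctxSup_some_suffix h with ⟨P, rfl⟩ | ⟨P, rfl⟩
  · rw [ctxSup_right] at h
    rw [ctxSup_left]
    obtain rfl := Option.some_injective _ h
    rw [Finset.union_comm]
  · rw [ctxSup_left] at h
    rw [ctxSup_right]
    obtain rfl := Option.some_injective _ h
    rw [Finset.union_comm]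

lemma ctxSup_snoc (Γ Δ : Ctx) (x : Var) :
    ctxSup (Γ.snoc x) (Δ.snoc x) = (ctxSup Γ Δ).map (·.snoc x) := by
  obtain ⟨G₁, L₁⟩ := Γ; obtain ⟨G₂, L₂⟩ := Δ
  show ctxSup (G₁, L₁ ++ [x]) (G₂, L₂ ++ [x]) = _
  rw [ctxSup, ctxSup]
  simp only [List.reverse_append, List.reverse_cons, List.reverse_nil, List.nil_append,
    List.singleton_append]
  rw [supAux]
  simp only [if_pos rfl]
  cases hs : supAux G₁ L₁.reverse G₂ L₂.reverse with
  | none => simp [hs]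
  | some p => simp [hs, Ctx.snoc]


lemma olam_bound {x : Var} {Φ Γ : Ctx} (h : CtxLe Φ (Γ.snoc x)) :
    ∃ Ψ, Olam x Φ = some Ψ ∧ CtxLe Ψ Γ := by
  obtain ⟨P, e, s⟩ := ctxLe_elim h
  simp only [Ctx.snoc] at e s
  rcases eq_nil_or_concat' Φ.2 with h2 | ⟨L, a, h2⟩
  · refine ⟨(Φ.1.erase x, []), ?_, ?_⟩
    · rw [show Φ = (Φ.1, Φ.2) from rfl, h2, Olam_nil]
    · rw [h2, List.append_nil] at e
      refine ctxLe_intro Γ.2 (by simp) ?_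
      intro b hb
      simp only [Finset.mem_erase] at hb
      have := s hb.2
      rw [← e] at this
      simp only [Finset.mem_union, List.toFinset_append, List.toFinset_cons,
        List.toFinset_nil, Finset.mem_insert] at this ⊢
      rcases this with h' | h' | h'
      · tauto
      · tauto
      · simp at h'; exact absurd h' hb.1
  · rw [h2, ← List.append_assoc] at e
    obtain ⟨e', rfl⟩ := concat_inj' e
    refine ⟨(Φ.1, L), ?_, ?_⟩
    · rw [show Φ = (Φ.1, Φ.2) from rfl, h2, Olam_concat]
    · exact ctxLe_intro P e' s

lemma olam_mono {x : Var} {Φ' Φ Ψ : Ctx} (hle : CtxLe Φ' Φ) (h : Olam x Φ = some Ψ) :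
    ∃ Ψ', Olam x Φ' = some Ψ' ∧ CtxLe Ψ' Ψ := by
  obtain ⟨P, e, s⟩ := ctxLe_elim hle
  rcases Olam_some h with ⟨h2, rfl⟩ | ⟨L, h2, rfl⟩
  · -- Φ.2 = []
    rw [h2] at e
    obtain ⟨rfl, e2⟩ := List.append_eq_nil_iff.mp e.symm
    refine ⟨(Φ'.1.erase x, []), ?_, ?_⟩
    · rw [show Φ' = (Φ'.1, Φ'.2) from rfl, e2, Olam_nil]
    · refine ctxLe_intro [] (by simp) ?_
      simp only [List.toFinset_nil, Finset.union_empty]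
      exact Finset.erase_subset_erase x (by simpa using s)
  · -- Φ.2 = L ++ [x]
    rw [h2] at e
    rcases eq_nil_or_concat' Φ'.2 with h2' | ⟨L', a, h2'⟩
    · rw [h2', List.append_nil] at e
      refine ⟨(Φ'.1.erase x, []), ?_, ?_⟩
      · rw [show Φ' = (Φ'.1, Φ'.2) from rfl, h2', Olam_nil]
      · refine ctxLe_intro L (by simp) ?_
        intro b hb
        simp only [Finset.mem_erase] at hb
        have := s hb.2
        rw [← e] at this
        simp only [Finset.mem_union, List.toFinset_append, List.toFinset_cons,
          List.toFinset_nil, Finset.mem_insert] at this ⊢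
        rcases this with h' | h' | h'
        · tauto
        · tauto
        · simp at h'; exact absurd h' hb.1
    · rw [h2', ← List.append_assoc] at e
      obtain ⟨e', rfl⟩ := concat_inj' e
      refine ⟨(Φ'.1, L'), ?_, ?_⟩
      · rw [show Φ' = (Φ'.1, Φ'.2) from rfl, h2', Olam_concat]
      · exact ctxLe_intro P e' s


lemma ctxSup_base (G₁ G₂ : Finset Var) (L : List Var) :
    ctxSup (G₁, []) (G₂, L) = some (G₁ \ L.toFinset ∪ G₂, L) := by
  have := ctxSup_right G₁ G₂ [] L
  simpa using this

lemma olam_sup_aux {x : Var} {H G₁ G₂ : Finset Var} {L₁ P : List Var} {W : Ctx}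
    (hH : H = G₁ \ P.toFinset ∪ G₂)
    (hO : Olam x (H, P ++ L₁) = some W) :
    ∃ W₁ W₂, Olam x (G₁, L₁) = some W₁ ∧ Olam x (G₂, P ++ L₁) = some W₂ ∧
      ctxSup W₁ W₂ = some W := by
  rcases eq_nil_or_concat' L₁ with rfl | ⟨M, a, rfl⟩
  · simp only [List.append_nil] at hO ⊢
    rcases Olam_some hO with ⟨h2, rfl⟩ | ⟨L, h2, rfl⟩
    · -- P = []
      simp only at h2
      subst h2
      simp only [List.toFinset_nil, Finset.sdiff_empty] at hH
      refine ⟨(G₁.erase x, []), (G₂.erase x, []), Olam_nil x G₁, Olam_nil x G₂, ?_⟩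
      rw [ctxSup_base]
      congr 2
      subst hH
      ext b
      simp only [Finset.mem_union, Finset.mem_erase, Finset.mem_sdiff, List.toFinset_nil,
        Finset.notMem_empty, not_false_iff, and_true]
      tauto
    · -- P = L ++ [x]
      simp only at h2
      subst h2
      refine ⟨(G₁.erase x, []), (G₂, L), Olam_nil x G₁, Olam_concat x G₂ L, ?_⟩
      rw [ctxSup_base]
      subst hH
      congr 2
      ext b
      simp only [Finset.mem_union, Finset.mem_erase, Finset.mem_sdiff, List.toFinset_append,
        List.toFinset_cons, List.toFinset_nil, Finset.mem_insert]
      tauto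
  · rcases Olam_some hO with ⟨h2, rfl⟩ | ⟨L, h2, rfl⟩
    · simp at h2
    · simp only [← List.append_assoc] at h2
      obtain ⟨h2', hax⟩ := concat_inj' h2
      subst hax
      subst h2'
      refine ⟨(G₁, M), (G₂, P ++ M), Olam_concat _ G₁ M, ?_, ?_⟩
      · rw [← List.append_assoc]; exact Olam_concat _ G₂ (P ++ M)
      · rw [hH]; exact ctxSup_right G₁ G₂ M P

lemma olam_sup {x : Var} {Φ₁ Φ₂ Ψ W : Ctx} (hs : ctxSup Φ₁ Φ₂ = some Ψ)
    (hO : Olam x Ψ = some W) :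
    ∃ W₁ W₂, Olam x Φ₁ = some W₁ ∧ Olam x Φ₂ = some W₂ ∧ ctxSup W₁ W₂ = some W := by
  obtain ⟨G₁, L₁⟩ := Φ₁; obtain ⟨G₂, L₂⟩ := Φ₂
  rcases ctxSup_some_suffix hs with ⟨P, rfl⟩ | ⟨P, rfl⟩
  · rw [ctxSup_right] at hs
    obtain rfl := Option.some_injective _ hs
    exact olam_sup_aux rfl hO
  · rw [ctxSup_left] at hs
    obtain rfl := Option.some_injective _ hs
    obtain ⟨W₂, W₁, hW₂, hW₁, hsup⟩ :=
      olam_sup_aux (G₁ := G₂) (G₂ := G₁) (Finset.union_comm _ _) hO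
    exact ⟨W₁, W₂, hW₁, hW₂, ctxSup_comm hsup⟩


def fvS : Sb → Ctx → Option Ctx
  | .weak x, Φ => some (Φ.snoc x)
  | .push B x, Φ => (Olam x Φ).bind fun W => (FV B).bind fun ΦB => ctxSup W ΦB
  | .ren y x, Φ => (Olam x Φ).map (·.snoc y)
  | .lift S x, Φ => ((Olam x Φ).bind (fvS S)).map (·.snoc x)

lemma FV_var (x : Var) : FV (.var x) = some ({x}, []) := by rw [FV]

lemma FV_app (A B : Tm) :
    FV (.app A B) = (FV A).bind fun ΦA => (FV B).bind fun ΦB => ctxSup ΦA ΦB := by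
  rw [FV]; rfl

lemma FV_lam (x : Var) (A : Tm) : FV (.lam x A) = (FV A).bind (Olam x) := by
  rw [FV]; rfl

lemma FV_weak (x : Var) (A : Tm) :
    FV (.sub (.weak x) A) = (FV A).map (·.snoc x) := by
  rw [FV]

lemma FV_push (B : Tm) (x : Var) (A : Tm) :
    FV (.sub (.push B x) A) = FV (.app (.lam x A) B) := by
  conv_lhs => rw [FV]

lemma FV_ren (y x : Var) (A : Tm) :
    FV (.sub (.ren y x) A) = FV (.sub (.weak y) (.lam x A)) := by
  conv_lhs => rw [FV]

lemma FV_lift (S : Sb) (x : Var) (A : Tm) :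
    FV (.sub (.lift S x) A) = FV (.sub (.weak x) (.sub S (.lam x A))) := by
  conv_lhs => rw [FV]

theorem fv_sub : (S : Sb) → (A : Tm) → FV (.sub S A) = (FV A).bind (fvS S)
  | .weak x, A => by rw [FV_weak]; cases FV A <;> simp [fvS, Ctx.snoc]
  | .push B x, A => by
    rw [FV_push, FV_app, FV_lam]
    cases FV A <;> simp [fvS]
  | .ren y x, A => by
    rw [FV_ren, FV_weak, FV_lam]
    cases FV A <;> simp [fvS]
  | .lift S x, A => by
    rw [FV_lift, FV_weak, fv_sub S (.lam x A), FV_lam]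
    cases FV A <;> simp [fvS]


theorem fvS_mono : (S : Sb) → ∀ {Φ' Φ Θ : Ctx}, CtxLe Φ' Φ → fvS S Φ = some Θ →
    ∃ Θ', fvS S Φ' = some Θ' ∧ CtxLe Θ' Θ
  | .weak x, Φ', Φ, Θ, hle, h => by
    simp only [fvS, Option.some_inj] at h
    exact ⟨Φ'.snoc x, rfl, h ▸ ctxLe_snoc x hle⟩
  | .push B x, Φ', Φ, Θ, hle, h => by
    simp only [fvS] at h ⊢
    obtain ⟨W, hW, h⟩ := Option.bind_eq_some_iff.mp h
    obtain ⟨ΦB, hB, h⟩ := Option.bind_eq_some_iff.mp h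
    obtain ⟨W', hW', hle'⟩ := olam_mono hle hW
    obtain ⟨Θ', hΘ', hle''⟩ := ctxSup_mono hle' (CtxLe.refl ΦB) h
    exact ⟨Θ', by rw [hW', hB]; exact hΘ', hle''⟩
  | .ren y x, Φ', Φ, Θ, hle, h => by
    simp only [fvS] at h ⊢
    obtain ⟨W, hW, h⟩ := Option.map_eq_some_iff.mp h
    obtain ⟨W', hW', hle'⟩ := olam_mono hle hW
    exact ⟨W'.snoc y, by rw [hW']; rfl, h ▸ ctxLe_snoc y hle'⟩
  | .lift S x, Φ', Φ, Θ, hle, h => by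
    simp only [fvS] at h ⊢
    obtain ⟨V, hV, h⟩ := Option.map_eq_some_iff.mp h
    obtain ⟨W, hW, hV⟩ := Option.bind_eq_some_iff.mp hV
    obtain ⟨W', hW', hle'⟩ := olam_mono hle hW
    obtain ⟨V', hV', hle''⟩ := fvS_mono S hle' hV
    exact ⟨V'.snoc x, by rw [hW']; simp [hV'], h ▸ ctxLe_snoc x hle''⟩

theorem fvS_sup : (S : Sb) → ∀ {Φ₁ Φ₂ Ψ Θ : Ctx}, ctxSup Φ₁ Φ₂ = some Ψ →
    fvS S Ψ = some Θ →
    ∃ Θ₁ Θ₂ Θ', fvS S Φ₁ = some Θ₁ ∧ fvS S Φ₂ = some Θ₂ ∧ ctxSup Θ₁ Θ₂ = some Θ' ∧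
      CtxLe Θ' Θ
  | .weak x, Φ₁, Φ₂, Ψ, Θ, hsup, h => by
    simp only [fvS, Option.some_inj] at h ⊢
    refine ⟨Φ₁.snoc x, Φ₂.snoc x, Θ, rfl, rfl, ?_, CtxLe.refl Θ⟩
    rw [ctxSup_snoc, hsup, ← h]
    rfl
  | .push B x, Φ₁, Φ₂, Ψ, Θ, hsup, h => by
    simp only [fvS] at h ⊢
    obtain ⟨W, hW, h⟩ := Option.bind_eq_some_iff.mp h
    obtain ⟨ΦB, hB, h⟩ := Option.bind_eq_some_iff.mp h
    obtain ⟨W₁, W₂, hW₁, hW₂, hWs⟩ := olam_sup hsup hW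
    obtain ⟨hle1, hle2⟩ := ctxSup_le hWs
    obtain ⟨hleW, hleB⟩ := ctxSup_le h
    obtain ⟨Θ₁, hΘ₁, hleΘ₁⟩ := ctxSup_exists (CtxLe.trans hle1 hleW) hleB
    obtain ⟨Θ₂, hΘ₂, hleΘ₂⟩ := ctxSup_exists (CtxLe.trans hle2 hleW) hleB
    obtain ⟨Θ', hΘ', hleΘ'⟩ := ctxSup_exists hleΘ₁ hleΘ₂
    exact ⟨Θ₁, Θ₂, Θ', by rw [hW₁, hB]; exact hΘ₁, by rw [hW₂, hB]; exact hΘ₂, hΘ', hleΘ'⟩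
  | .ren y x, Φ₁, Φ₂, Ψ, Θ, hsup, h => by
    simp only [fvS] at h ⊢
    obtain ⟨W, hW, h⟩ := Option.map_eq_some_iff.mp h
    obtain ⟨W₁, W₂, hW₁, hW₂, hWs⟩ := olam_sup hsup hW
    refine ⟨W₁.snoc y, W₂.snoc y, W.snoc y, by rw [hW₁]; rfl, by rw [hW₂]; rfl, ?_,
      h ▸ CtxLe.refl _⟩
    rw [ctxSup_snoc, hWs]
    rfl
  | .lift S x, Φ₁, Φ₂, Ψ, Θ, hsup, h => by
    simp only [fvS] at h ⊢
    obtain ⟨V, hV, h⟩ := Option.map_eq_some_iff.mp h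
    obtain ⟨W, hW, hV⟩ := Option.bind_eq_some_iff.mp hV
    obtain ⟨W₁, W₂, hW₁, hW₂, hWs⟩ := olam_sup hsup hW
    obtain ⟨V₁, V₂, V', hV₁, hV₂, hVs, hleV⟩ := fvS_sup S hWs hV
    refine ⟨V₁.snoc x, V₂.snoc x, V'.snoc x, by rw [hW₁]; simp [hV₁],
      by rw [hW₂]; simp [hV₂], ?_, h ▸ ctxLe_snoc x hleV⟩
    rw [ctxSup_snoc, hVs]
    rfl


theorem judg_fv {Γ : Ctx} {A : Tm} (h : Judg Γ A) :
    ∃ Φ, FV A = some Φ ∧ CtxLe Φ Γ := by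
  refine Judg.rec (motive_1 := fun Γ A _ => ∃ Φ, FV A = some Φ ∧ CtxLe Φ Γ)
    (motive_2 := fun Γ S Δ _ => ∀ A Φ, FV A = some Φ → CtxLe Φ Δ →
      ∃ Ψ, FV (.sub S A) = some Ψ ∧ CtxLe Ψ Γ)
    ?_ ?_ ?_ ?_ ?_ ?_ ?_ ?_ ?_ ?_ h
  · -- r1
    intro G x hx
    exact ⟨({x}, []), FV_var x, ctxLe_intro [] (by simp) (by simp [hx])⟩
  · -- r2
    intro Γ x
    refine ⟨({x}, []), FV_var x, ctxLe_intro (Γ.2 ++ [x]) (by simp [Ctx.snoc]) ?_⟩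
    simp
  · -- r3
    intro Γ x y hxy hJ ih
    obtain ⟨Φ, hΦ, hle⟩ := ih
    rw [FV_var] at hΦ
    obtain rfl := Option.some_injective _ hΦ.symm
    obtain ⟨P, e, s⟩ := ctxLe_elim hle
    rw [List.append_nil] at e
    refine ⟨({x}, []), FV_var x, ctxLe_intro (Γ.2 ++ [y]) (by simp [Ctx.snoc]) ?_⟩
    intro b hb
    have := s hb
    rw [← e] at this
    simp only [Ctx.snoc, Finset.mem_union, List.toFinset_append] at this ⊢
    tauto
  · -- r4
    intro Γ A B hA hB ihA ihB
    obtain ⟨ΦA, hΦA, hleA⟩ := ihA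
    obtain ⟨ΦB, hΦB, hleB⟩ := ihB
    obtain ⟨Ψ, hΨ, hle⟩ := ctxSup_exists hleA hleB
    exact ⟨Ψ, by rw [FV_app, hΦA, hΦB]; exact hΨ, hle⟩
  · -- r5
    intro Γ x A hA ih
    obtain ⟨Φ, hΦ, hle⟩ := ih
    obtain ⟨Ψ, hΨ, hle'⟩ := olam_bound hle
    exact ⟨Ψ, by rw [FV_lam, hΦ]; exact hΨ, hle'⟩
  · -- r6
    intro Γ Δ S A hS hA ihS ihA
    obtain ⟨Φ, hΦ, hle⟩ := ihA
    exact ihS A Φ hΦ hle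
  · -- r7
    intro Γ B x hB ihB A Φ hΦ hle
    obtain ⟨ΦB, hΦB, hleB⟩ := ihB
    obtain ⟨W, hW, hleW⟩ := olam_bound hle
    obtain ⟨Ψ, hΨ, hle'⟩ := ctxSup_exists hleW hleB
    refine ⟨Ψ, ?_, hle'⟩
    rw [fv_sub, hΦ]
    simp only [fvS, Option.bind_some, hW, hΦB]
    exact hΨ
  · -- r8
    intro Γ x A Φ hΦ hle
    exact ⟨Φ.snoc x, by rw [FV_weak, hΦ]; rfl, ctxLe_snoc x hle⟩
  · -- r9
    intro Γ y x A Φ hΦ hle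
    obtain ⟨W, hW, hleW⟩ := olam_bound hle
    refine ⟨W.snoc y, ?_, ctxLe_snoc y hleW⟩
    rw [fv_sub, hΦ]
    simp only [fvS, Option.bind_some, hW]
    rfl
  · -- r10
    intro Γ Δ S x hS ihS A Φ hΦ hle
    obtain ⟨W, hW, hleW⟩ := olam_bound hle
    have hlam : FV (.lam x A) = some W := by rw [FV_lam, hΦ]; exact hW
    obtain ⟨V, hV, hleV⟩ := ihS (.lam x A) W hlam hleW
    refine ⟨V.snoc x, ?_, ctxLe_snoc x hleV⟩
    rw [FV_lift, FV_weak, hV]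
    rfl


lemma erase_single {x z : Var} (h : x ≠ z) : ({z} : Finset Var).erase x = {z} :=
  Finset.erase_eq_of_notMem (by simp [h])

theorem step_fv {A B : Tm} (h : Step A B) :
    ∀ Φ, FV A = some Φ → ∃ Φ', FV B = some Φ' ∧ CtxLe Φ' Φ := by
  refine Step.rec (motive_1 := fun A B _ => ∀ Φ, FV A = some Φ →
      ∃ Φ', FV B = some Φ' ∧ CtxLe Φ' Φ)
    (motive_2 := fun S S' _ => ∀ A Φ, FV (.sub S A) = some Φ →
      ∃ Φ', FV (.sub S' A) = some Φ' ∧ CtxLe Φ' Φ)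
    ?_ ?_ ?_ ?_ ?_ ?_ ?_ ?_ ?_ ?_ ?_ ?_ ?_ ?_ ?_ ?_ ?_ ?_ ?_ ?_ ?_ h
  · -- beta
    intro x A B Φ hΦ
    exact ⟨Φ, by rw [FV_push]; exact hΦ, CtxLe.refl Φ⟩
  · -- app
    intro S A B Φ hΦ
    rw [fv_sub, FV_app] at hΦ
    obtain ⟨Ψ, hΨ, hfv⟩ := Option.bind_eq_some_iff.mp hΦ
    obtain ⟨ΦA, hA, h1⟩ := Option.bind_eq_some_iff.mp hΨ
    obtain ⟨ΦB, hB, hsup⟩ := Option.bind_eq_some_iff.mp h1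
    obtain ⟨Θ₁, Θ₂, Θ', hΘ₁, hΘ₂, hΘ', hle⟩ := fvS_sup S hsup hfv
    refine ⟨Θ', ?_, hle⟩
    rw [FV_app, fv_sub, fv_sub, hA, hB]
    simp only [Option.bind_some, hΘ₁, hΘ₂]
    exact hΘ'
  · -- lam
    intro S x A Φ hΦ
    refine ⟨Φ, ?_, CtxLe.refl Φ⟩
    rw [FV_lam, FV_lift, FV_weak, hΦ]
    simp only [Option.map_some, Option.bind_some]
    exact Olam_snoc x Φ
  · -- var
    intro B x Φ hΦ
    rw [fv_sub, FV_var, Option.bind_some] at hΦ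
    simp only [fvS, Olam_nil, Finset.erase_singleton, Option.bind_some] at hΦ
    obtain ⟨ΦB, hB, hsup⟩ := Option.bind_eq_some_iff.mp hΦ
    obtain ⟨GB, LB⟩ := ΦB
    rw [ctxSup_base] at hsup
    simp only [Option.some_inj] at hsup
    refine ⟨(GB, LB), hB, ?_⟩
    rw [← hsup]
    simp only [Finset.empty_sdiff, Finset.empty_union]
    exact CtxLe.refl _
  · -- shift
    intro B x A Φ hΦ
    rw [fv_sub, FV_weak] at hΦ
    rcases hA : FV A with _ | ΦA
    · rw [hA] at hΦ; simp at hΦ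
    rw [hA] at hΦ
    simp only [Option.map_some, Option.bind_some, fvS, Olam_snoc, Option.bind_some] at hΦ
    obtain ⟨ΦB, hB, hsup⟩ := Option.bind_eq_some_iff.mp hΦ
    exact ⟨ΦA, rfl, (ctxSup_le hsup).1⟩
  · -- shift'
    intro B x z hxz Φ hΦ
    rw [fv_sub, FV_var, Option.bind_some] at hΦ
    simp only [fvS, Olam_nil, erase_single hxz, Option.bind_some] at hΦ
    obtain ⟨ΦB, hB, hsup⟩ := Option.bind_eq_some_iff.mp hΦ
    exact ⟨({z}, []), FV_var z, (ctxSup_le hsup).1⟩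
  · -- idVar
    intro y x Φ hΦ
    rw [fv_sub, FV_var, Option.bind_some] at hΦ
    simp only [fvS, Olam_nil, Finset.erase_singleton, Option.map_some] at hΦ
    obtain rfl := Option.some_injective _ hΦ.symm
    refine ⟨({y}, []), FV_var y, ctxLe_intro [y] rfl (by simp [Ctx.snoc])⟩
  · -- idShift
    intro y x A Φ hΦ
    rw [fv_sub, FV_weak] at hΦ
    rcases hA : FV A with _ | ΦA
    · rw [hA] at hΦ; simp at hΦ
    rw [hA] at hΦ
    simp only [Option.map_some, Option.bind_some, fvS, Olam_snoc, Option.map_some] at hΦ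
    refine ⟨Φ, ?_, CtxLe.refl Φ⟩
    rw [FV_weak, hA, Option.map_some, ← hΦ]
  · -- idShift'
    intro y x z hxz Φ hΦ
    rw [fv_sub, FV_var, Option.bind_some] at hΦ
    simp only [fvS, Olam_nil, erase_single hxz, Option.map_some] at hΦ
    refine ⟨Φ, ?_, CtxLe.refl Φ⟩
    rw [FV_weak, FV_var, Option.map_some, ← hΦ]
  · -- liftVar
    intro S x Φ hΦ
    rw [fv_sub, FV_var, Option.bind_some] at hΦ
    simp only [fvS, Olam_nil, Finset.erase_singleton, Option.bind_some] at hΦ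
    obtain ⟨V, hV, hΦ'⟩ := Option.map_eq_some_iff.mp hΦ
    refine ⟨({x}, []), FV_var x, ?_⟩
    rw [← hΦ']
    exact ctxLe_intro (V.2 ++ [x]) (by simp [Ctx.snoc]) (by simp)
  · -- liftShift
    intro S x A Φ hΦ
    rw [fv_sub, FV_weak] at hΦ
    rcases hA : FV A with _ | ΦA
    · rw [hA] at hΦ; simp at hΦ
    rw [hA] at hΦ
    simp only [Option.map_some, Option.bind_some, fvS, Olam_snoc, Option.bind_some] at hΦ
    refine ⟨Φ, ?_, CtxLe.refl Φ⟩
    rw [FV_weak, fv_sub, hA, Option.bind_some, ← hΦ]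
  · -- liftShift'
    intro S x z hxz Φ hΦ
    rw [fv_sub, FV_var, Option.bind_some] at hΦ
    simp only [fvS, Olam_nil, erase_single hxz, Option.bind_some] at hΦ
    refine ⟨Φ, ?_, CtxLe.refl Φ⟩
    rw [FV_weak, fv_sub, FV_var, Option.bind_some, ← hΦ]
  · -- w
    intro x z hxz Φ hΦ
    rw [FV_weak, FV_var, Option.map_some] at hΦ
    obtain rfl := Option.some_injective _ hΦ.symm
    exact ⟨({z}, []), FV_var z, ctxLe_intro [x] rfl (by simp [Ctx.snoc])⟩
  · -- alpha
    intro x y A Φ0 hFV hx hy Φ hΦ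
    rw [FV_lam] at hΦ
    obtain ⟨ΦA, hA, hO⟩ := Option.bind_eq_some_iff.mp hΦ
    refine ⟨Φ, ?_, CtxLe.refl Φ⟩
    rw [FV_lam, fv_sub, hA, Option.bind_some]
    simp only [fvS, hO, Option.map_some, Option.bind_some]
    exact Olam_snoc y Φ
  · -- lamCong
    intro x A A' hs ih Φ hΦ
    rw [FV_lam] at hΦ
    obtain ⟨ΦA, hA, hO⟩ := Option.bind_eq_some_iff.mp hΦ
    obtain ⟨ΦA', hA', hle⟩ := ih ΦA hA
    obtain ⟨Ψ', hΨ', hle'⟩ := olam_mono hle hO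
    exact ⟨Ψ', by rw [FV_lam, hA', Option.bind_some]; exact hΨ', hle'⟩
  · -- appL
    intro A A' B hs ih Φ hΦ
    rw [FV_app] at hΦ
    obtain ⟨ΦA, hA, h1⟩ := Option.bind_eq_some_iff.mp hΦ
    obtain ⟨ΦB, hB, hsup⟩ := Option.bind_eq_some_iff.mp h1
    obtain ⟨ΦA', hA', hle⟩ := ih ΦA hA
    obtain ⟨Ψ', hΨ', hle'⟩ := ctxSup_mono hle (CtxLe.refl ΦB) hsup
    exact ⟨Ψ', by rw [FV_app, hA', hB]; simpa using hΨ', hle'⟩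
  · -- appR
    intro A B B' hs ih Φ hΦ
    rw [FV_app] at hΦ
    obtain ⟨ΦA, hA, h1⟩ := Option.bind_eq_some_iff.mp hΦ
    obtain ⟨ΦB, hB, hsup⟩ := Option.bind_eq_some_iff.mp h1
    obtain ⟨ΦB', hB', hle⟩ := ih ΦB hB
    obtain ⟨Ψ', hΨ', hle'⟩ := ctxSup_mono (CtxLe.refl ΦA) hle hsup
    exact ⟨Ψ', by rw [FV_app, hA, hB']; simpa using hΨ', hle'⟩
  · -- subL
    intro S S' A hs ih Φ hΦ
    exact ih A Φ hΦ
  · -- subR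
    intro S A A' hs ih Φ hΦ
    rw [fv_sub] at hΦ
    obtain ⟨ΦA, hA, hf⟩ := Option.bind_eq_some_iff.mp hΦ
    obtain ⟨ΦA', hA', hle⟩ := ih ΦA hA
    obtain ⟨Φ', hΦ', hle'⟩ := fvS_mono S hle hf
    exact ⟨Φ', by rw [fv_sub, hA', Option.bind_some]; exact hΦ', hle'⟩
  · -- SStep.push
    intro B B' x hs ih A Φ hΦ
    rw [fv_sub] at hΦ
    obtain ⟨ΦA, hA, hf⟩ := Option.bind_eq_some_iff.mp hΦ
    simp only [fvS] at hf
    obtain ⟨W, hW, h1⟩ := Option.bind_eq_some_iff.mp hf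
    obtain ⟨ΦB, hB, hsup⟩ := Option.bind_eq_some_iff.mp h1
    obtain ⟨ΦB', hB', hle⟩ := ih ΦB hB
    obtain ⟨Ψ', hΨ', hle'⟩ := ctxSup_mono (CtxLe.refl W) hle hsup
    refine ⟨Ψ', ?_, hle'⟩
    rw [fv_sub, hA, Option.bind_some]
    simp only [fvS, hW, hB', Option.bind_some]
    exact hΨ'
  · -- SStep.lift
    intro S S' x hs ih A Φ hΦ
    rw [FV_lift, FV_weak] at hΦ
    obtain ⟨V, hV, hΦ'⟩ := Option.map_eq_some_iff.mp hΦ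
    obtain ⟨V', hV', hle⟩ := ih (.lam x A) V hV
    refine ⟨V'.snoc x, ?_, hΦ' ▸ ctxLe_snoc x hle⟩
    rw [FV_lift, FV_weak, hV', Option.map_some]

/-- Free variables do not increase along λα-reduction of well-formed terms. -/
theorem FV_decreasing (A B : Tm) (hwf : ∃ Γ : Ctx, Judg Γ A) (h : Step A B) :
    ∃ Φa Φb : Ctx, FV A = some Φa ∧ FV B = some Φb ∧ CtxLe Φb Φa := by
  obtain ⟨Γ, hJ⟩ := hwf
  obtain ⟨Φa, hΦa, -⟩ := judg_fv hJ
  obtain ⟨Φb, hΦb, hle⟩ := step_fv h Φa hΦa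
  exact ⟨Φa, Φb, hΦa, hΦb, hle⟩
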